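/- Let E be the 3×3 matrix with rows (0, 2a, 2b), (0, 2c, 2d), (0, 0, 0) where a, b, c, d ∈ ℂ satisfy c(|a|² + |d|²) = −a d b̄, and assume that if a = 0 = d then 2|c| ≤ |b|. Then for every unit complex number w, the largest eigenvalue of (1/2)(w̄ E + w E*) equals √(|a|² + |d|² + |b|²); hence the field of values of E is the closed disk of radius √(|a|² + |d|² + |b|²) centered at the origin. -/

import Mathlib

open Matrix

/-- The Hermitian part `Φ(A) = (A + A*)/2`. -/
noncomputable def hermPart {n : ℕ} (A : Matrix (Fin n) (Fin n) ℂ) :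
    Matrix (Fin n) (Fin n) ℂ :=
  (1 / 2 : ℂ) • (A + Aᴴ)

/-- The field of values (numerical range) `W(X) = {u* X u : ‖u‖ = 1}`. -/
def fov {n : ℕ} (X : Matrix (Fin n) (Fin n) ℂ) : Set ℂ :=
  {z | ∃ u : Fin n → ℂ, star u ⬝ᵥ u = 1 ∧ z = star u ⬝ᵥ X.mulVec u}

lemma hermPart_isHermitian {n : ℕ} (A : Matrix (Fin n) (Fin n) ℂ) :
    (hermPart A).IsHermitian := by
  unfold hermPart Matrix.IsHermitian
  rw [conjTranspose_smul, conjTranspose_add, conjTranspose_conjTranspose]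
  norm_num [add_comm]

-- sesquilinear identity
lemma hermPart_form {n : ℕ} (A : Matrix (Fin n) (Fin n) ℂ) (x y : Fin n → ℂ) :
    star x ⬝ᵥ (hermPart A) *ᵥ y
      = (1/2) * (star x ⬝ᵥ A *ᵥ y + starRingEnd ℂ (star y ⬝ᵥ A *ᵥ x)) := by
  have key : star x ⬝ᵥ Aᴴ *ᵥ y = starRingEnd ℂ (star y ⬝ᵥ A *ᵥ x) := by
    have := congrArg star (Matrix.star_mulVec A x)
    calc star x ⬝ᵥ Aᴴ *ᵥ y = (star x ᵥ* Aᴴ) ⬝ᵥ y := dotProduct_mulVec _ _ _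
    _ = star (A *ᵥ x) ⬝ᵥ y := by rw [Matrix.star_mulVec]
    _ = starRingEnd ℂ (star y ⬝ᵥ (A *ᵥ x)) := by
        simp [dotProduct, Finset.sum_comm, map_sum, mul_comm]
  simp [hermPart, Matrix.add_mulVec, Matrix.smul_mulVec, dotProduct_add, dotProduct_smul,
    key, mul_add]

-- det  factorization through eigenvalues
lemma det_sub_smul_eq_prod {n : ℕ} {H : Matrix (Fin n) (Fin n) ℂ} (hH : H.IsHermitian)
    (x : ℝ) :
    det (H - (x:ℂ) • 1) = ∏ i, ((hH.eigenvalues i : ℂ) - x) := by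
  have hU : (hH.eigenvectorUnitary : Matrix (Fin n) (Fin n) ℂ) *
      (star (hH.eigenvectorUnitary : Matrix (Fin n) (Fin n) ℂ)) = 1 :=
    Matrix.mem_unitaryGroup_iff.mp hH.eigenvectorUnitary.2
  set U : Matrix (Fin n) (Fin n) ℂ := (hH.eigenvectorUnitary : Matrix (Fin n) (Fin n) ℂ)
  have key : H - (x:ℂ) • 1
      = U * (diagonal (RCLike.ofReal ∘ hH.eigenvalues) - (x:ℂ) • 1) * star U := by
    rw [Matrix.mul_sub, Matrix.sub_mul]
    conv_lhs => rw [hH.spectral_theorem, Unitary.conjStarAlgAut_apply]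
    congr 1
    rw [Matrix.mul_smul, Matrix.smul_mul, Matrix.mul_one, hU]
  have hU' : star U * U = 1 := Matrix.mem_unitaryGroup_iff'.mp hH.eigenvectorUnitary.2
  rw [key, det_mul, det_mul, mul_comm, ← mul_assoc, ← det_mul, hU', det_one, one_mul]
  rw [smul_one_eq_diagonal, diagonal_sub, det_diagonal]
  rfl

-- quadratic form bound
lemma form_le {n : ℕ} {H : Matrix (Fin n) (Fin n) ℂ} (hH : H.IsHermitian) {r : ℝ}
    (hle : ∀ i, hH.eigenvalues i ≤ r) {u : Fin n → ℂ} (hu : star u ⬝ᵥ u = 1) :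
    (star u ⬝ᵥ H *ᵥ u).re ≤ r := by
  have hU : (hH.eigenvectorUnitary : Matrix (Fin n) (Fin n) ℂ) *
      star (hH.eigenvectorUnitary : Matrix (Fin n) (Fin n) ℂ) = 1 :=
    Matrix.mem_unitaryGroup_iff.mp hH.eigenvectorUnitary.2
  set U : Matrix (Fin n) (Fin n) ℂ := (hH.eigenvectorUnitary : Matrix (Fin n) (Fin n) ℂ) with hUdef
  set y : Fin n → ℂ := star U *ᵥ u with hy
  have hsy : star y = star u ᵥ* U := by
    rw [hy, star_mulVec, Matrix.star_eq_conjTranspose, conjTranspose_conjTranspose]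
  have key : star u ⬝ᵥ H *ᵥ u
      = star y ⬝ᵥ (diagonal (RCLike.ofReal ∘ hH.eigenvalues)) *ᵥ y := by
    conv_lhs => rw [hH.spectral_theorem, Unitary.conjStarAlgAut_apply]
    rw [← mulVec_mulVec, ← mulVec_mulVec, dotProduct_mulVec, ← hsy]
  have hnorm : star y ⬝ᵥ y = 1 := by
    rw [hsy, ← dotProduct_mulVec, hy, mulVec_mulVec, hU, one_mulVec, hu]
  have hnormsum : ∑ i, Complex.normSq (y i) = 1 := by
    have : star y ⬝ᵥ y = ((∑ i, Complex.normSq (y i) : ℝ) : ℂ) := by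
      push_cast
      simp [dotProduct, ← Complex.mul_conj, mul_comm]
    rw [this] at hnorm
    exact_mod_cast hnorm
  have keyre : (star u ⬝ᵥ H *ᵥ u).re = ∑ i, hH.eigenvalues i * Complex.normSq (y i) := by
    rw [key]
    simp only [dotProduct, mulVec_diagonal, Complex.re_sum]
    congr 1; funext i
    have : star y i * ((RCLike.ofReal ∘ hH.eigenvalues) i * y i)
        = ((hH.eigenvalues i : ℂ)) * (y i * starRingEnd ℂ (y i)) := by
      simp [Pi.star_apply]; ring
    rw [this, Complex.mul_conj]
    norm_num
  rw [keyre]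
  calc ∑ i, hH.eigenvalues i * Complex.normSq (y i)
      ≤ ∑ i, r * Complex.normSq (y i) := by
        apply Finset.sum_le_sum
        intro i _
        exact mul_le_mul_of_nonneg_right (hle i) (Complex.normSq_nonneg _)
    _ = r := by rw [← Finset.mul_sum, hnormsum, mul_one]

lemma hermPart_explicit (a b c d w : ℂ) :
    hermPart ((starRingEnd ℂ w) • !![0, 2*a, 2*b; 0, 2*c, 2*d; 0, 0, 0])
      = !![0, starRingEnd ℂ w * a, starRingEnd ℂ w * b;
           w * starRingEnd ℂ a, starRingEnd ℂ w * c + w * starRingEnd ℂ c, starRingEnd ℂ w * d;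
           w * starRingEnd ℂ b, w * starRingEnd ℂ d, 0] := by
  ext i j
  fin_cases i <;> fin_cases j <;>
    simp [hermPart, Matrix.conjTranspose_apply, Matrix.vecHead, Matrix.vecTail] <;> ring

lemma det_explicit (a b c d w : ℂ)
    (habcd : c * (((‖a‖) ^ 2 + (‖d‖) ^ 2 : ℝ) : ℂ)
      = -(a * d * starRingEnd ℂ b))
    (hw : ‖w‖ = 1) (x : ℝ) :
    det (!![0, starRingEnd ℂ w * a, starRingEnd ℂ w * b;
           w * starRingEnd ℂ a, starRingEnd ℂ w * c + w * starRingEnd ℂ c, starRingEnd ℂ w * d;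
           w * starRingEnd ℂ b, w * starRingEnd ℂ d, 0] - (x:ℂ) • (1 : Matrix (Fin 3) (Fin 3) ℂ))
      = (((2 * (starRingEnd ℂ w * c).re - x) *
          (x^2 - ((‖a‖)^2 + (‖d‖)^2 + (‖b‖)^2)) : ℝ) : ℂ) := by
  have hw1 : w * starRingEnd ℂ w = 1 := by
    rw [Complex.mul_conj]
    norm_cast
    simp [Complex.normSq_eq_norm_sq, hw]
  have habcd' : starRingEnd ℂ c * (((‖a‖) ^ 2 + (‖d‖) ^ 2 : ℝ) : ℂ)
      = -(starRingEnd ℂ a * starRingEnd ℂ d * b) := by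
    have := congrArg (starRingEnd ℂ) habcd
    simpa using this
  have hT : (2:ℂ) * (((starRingEnd ℂ w * c).re : ℝ) : ℂ)
      = starRingEnd ℂ w * c + w * starRingEnd ℂ c := by
    have h1 : starRingEnd ℂ w * c + w * starRingEnd ℂ c
        = starRingEnd ℂ w * c + starRingEnd ℂ (starRingEnd ℂ w * c) := by
      simp [mul_comm]
    rw [h1, Complex.add_conj]
    push_cast
    ring
  have ha : ((‖a‖ ^ 2 : ℝ) : ℂ) = a * starRingEnd ℂ a := by
    rw [Complex.sq_norm, Complex.mul_conj]
  have hb : ((‖b‖ ^ 2 : ℝ) : ℂ) = b * starRingEnd ℂ b := by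
    rw [Complex.sq_norm, Complex.mul_conj]
  have hd : ((‖d‖ ^ 2 : ℝ) : ℂ) = d * starRingEnd ℂ d := by
    rw [Complex.sq_norm, Complex.mul_conj]
  rw [det_fin_three]
  push_cast [ha, hb, hd] at habcd habcd' ⊢
  rw [hT]
  simp [Matrix.one_apply, Fin.ext_iff]
  linear_combination (starRingEnd ℂ w) * habcd + w * habcd'
    + ((x:ℂ) * d * starRingEnd ℂ d + (x:ℂ) * a * starRingEnd ℂ a
       + starRingEnd ℂ w * a * d * starRingEnd ℂ b + w * starRingEnd ℂ a * starRingEnd ℂ d * b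
       - (starRingEnd ℂ w * c + w * starRingEnd ℂ c - (x:ℂ)) * b * starRingEnd ℂ b) * hw1

lemma two_c_le_b (a b c d : ℂ)
    (habcd : c * (((‖a‖) ^ 2 + (‖d‖) ^ 2 : ℝ) : ℂ)
      = -(a * d * starRingEnd ℂ b))
    (hzero : a = 0 ∧ d = 0 → 2 * ‖c‖ ≤ ‖b‖) :
    2 * ‖c‖ ≤ ‖b‖ := by
  by_cases h : a = 0 ∧ d = 0
  · exact hzero h
  · have hs : 0 < ‖a‖ ^ 2 + ‖d‖ ^ 2 := by
      rcases not_and_or.mp h with h | h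
      · have := norm_pos_iff.mpr h
        positivity
      · have := norm_pos_iff.mpr h
        positivity
    have habs := congrArg (‖·‖) habcd
    simp only [norm_mul, norm_neg, Complex.norm_real, Complex.norm_conj, Real.norm_eq_abs] at habs
    rw [abs_of_nonneg hs.le] at habs
    nlinarith [mul_nonneg (norm_nonneg b) (sq_nonneg (‖a‖ - ‖d‖)),
      norm_nonneg c, norm_nonneg a, norm_nonneg d, norm_nonneg b]

lemma eig_facts (a b c d : ℂ)
    (habcd : c * (((‖a‖) ^ 2 + (‖d‖) ^ 2 : ℝ) : ℂ)
      = -(a * d * starRingEnd ℂ b))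
    (hzero : a = 0 ∧ d = 0 → 2 * ‖c‖ ≤ ‖b‖)
    (w : ℂ) (hw : ‖w‖ = 1)
    (hH : (hermPart ((starRingEnd ℂ w) •
        !![0, 2 * a, 2 * b; 0, 2 * c, 2 * d; 0, 0, 0])).IsHermitian) :
    (∀ i, hH.eigenvalues i
        ≤ Real.sqrt ((‖a‖) ^ 2 + (‖d‖) ^ 2 + (‖b‖) ^ 2)) ∧
    (∃ i, hH.eigenvalues i
        = Real.sqrt ((‖a‖) ^ 2 + (‖d‖) ^ 2 + (‖b‖) ^ 2)) ∧
    (∃ i, hH.eigenvalues i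
        = - Real.sqrt ((‖a‖) ^ 2 + (‖d‖) ^ 2 + (‖b‖) ^ 2)) := by
  set s2 : ℝ := (‖a‖) ^ 2 + (‖d‖) ^ 2 + (‖b‖) ^ 2 with hs2def
  set R : ℝ := Real.sqrt s2 with hRdef
  have hs2 : 0 ≤ s2 := by positivity
  have hR2 : R ^ 2 = s2 := Real.sq_sqrt hs2
  have hRnn : 0 ≤ R := Real.sqrt_nonneg _
  set T : ℝ := 2 * (starRingEnd ℂ w * c).re with hTdef
  have hTle : |T| ≤ R := by
    have h1 : |T| ≤ 2 * ‖c‖ := by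
      rw [hTdef, abs_mul, abs_two]
      have h2 : ‖starRingEnd ℂ w * c‖ = ‖c‖ := by
        rw [norm_mul]
        simp [Complex.norm_conj, hw]
      have h3 := Complex.abs_re_le_norm (starRingEnd ℂ w * c)
      rw [h2] at h3
      linarith
    have h2 : ‖b‖ ≤ R := by
      rw [hRdef]
      have : ‖b‖ = Real.sqrt ((‖b‖) ^ 2) :=
        (Real.sqrt_sq (norm_nonneg b)).symm
      rw [this]
      apply Real.sqrt_le_sqrt
      nlinarith [sq_nonneg (‖a‖), sq_nonneg (‖d‖)]
    have h3 := two_c_le_b a b c d habcd hzero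
    linarith
  have keyC : ∀ x : ℝ, (∏ i, ((hH.eigenvalues i : ℂ) - x))
      = (((T - x) * (x ^ 2 - s2) : ℝ) : ℂ) := by
    intro x
    rw [← det_sub_smul_eq_prod hH x, hermPart_explicit]
    exact det_explicit a b c d w habcd hw x
  have keyR : ∀ x : ℝ, (hH.eigenvalues 0 - x) * ((hH.eigenvalues 1 - x) * (hH.eigenvalues 2 - x))
      = (T - x) * (x ^ 2 - s2) := by
    intro x
    have h := keyC x
    rw [Fin.prod_univ_three] at h
    have : (((hH.eigenvalues 0 - x) * ((hH.eigenvalues 1 - x) * (hH.eigenvalues 2 - x)) : ℝ) : ℂ)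
        = (((T - x) * (x ^ 2 - s2) : ℝ) : ℂ) := by
      push_cast
      push_cast at h
      linear_combination h
    exact_mod_cast this
  have hroot : ∀ i, (T - hH.eigenvalues i) * ((hH.eigenvalues i) ^ 2 - s2) = 0 := by
    intro i
    fin_cases i
    · have h := keyR (hH.eigenvalues 0)
      simp only [sub_self, zero_mul, mul_zero] at h
      simpa using h.symm
    · have h := keyR (hH.eigenvalues 1)
      simp only [sub_self, zero_mul, mul_zero] at h
      simpa using h.symm
    · have h := keyR (hH.eigenvalues 2)
      simp only [sub_self, zero_mul, mul_zero] at h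
      simpa using h.symm
  refine ⟨?_, ?_, ?_⟩
  · intro i
    rcases mul_eq_zero.mp (hroot i) with h | h
    · have := le_abs_self T
      linarith
    · nlinarith [hRnn]
  · have h := keyR R
    have hz : (T - R) * (R ^ 2 - s2) = 0 := by rw [hR2]; ring
    rw [hz] at h
    rcases mul_eq_zero.mp h with h1 | h1
    · exact ⟨0, by linarith⟩
    rcases mul_eq_zero.mp h1 with h2 | h2
    · exact ⟨1, by linarith⟩
    · exact ⟨2, by linarith⟩
  · have h := keyR (-R)
    have hz : (T - -R) * ((-R) ^ 2 - s2) = 0 := by rw [neg_pow, hR2]; ring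
    rw [hz] at h
    rcases mul_eq_zero.mp h with h1 | h1
    · exact ⟨0, by linarith⟩
    rcases mul_eq_zero.mp h1 with h2 | h2
    · exact ⟨1, by linarith⟩
    · exact ⟨2, by linarith⟩

lemma complex_eq_of {z : ℂ} {r : ℝ} (h1 : z + starRingEnd ℂ z = 2 * r)
    (h2 : ‖z‖ ≤ r) : z = r := by
  have hre : z.re = r := by
    have := Complex.add_conj z
    rw [this] at h1
    have : (2 * z.re : ℝ) = (2 * r : ℝ) := by exact_mod_cast h1
    linarith
  have him : z.im = 0 := by
    have habs : z.re ^ 2 + z.im ^ 2 ≤ r ^ 2 := by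
      have := Complex.sq_norm z
      rw [Complex.normSq_apply] at this
      nlinarith [norm_nonneg z]
    rw [hre] at habs
    have h2 : z.im ^ 2 ≤ 0 := by nlinarith
    have h3 : z.im ^ 2 = 0 := le_antisymm h2 (sq_nonneg _)
    exact pow_eq_zero_iff two_ne_zero |>.mp h3
  exact Complex.ext (by rw [hre]; simp) (by rw [him]; simp)

lemma abs_form_le (a b c d : ℂ)
    (habcd : c * (((‖a‖) ^ 2 + (‖d‖) ^ 2 : ℝ) : ℂ)
      = -(a * d * starRingEnd ℂ b))
    (hzero : a = 0 ∧ d = 0 → 2 * ‖c‖ ≤ ‖b‖)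
    {u : Fin 3 → ℂ} (hu : star u ⬝ᵥ u = 1) :
    ‖star u ⬝ᵥ (!![0, 2 * a, 2 * b; 0, 2 * c, 2 * d; 0, 0, 0]) *ᵥ u‖
      ≤ Real.sqrt ((‖a‖) ^ 2 + (‖d‖) ^ 2 + (‖b‖) ^ 2) := by
  set E : Matrix (Fin 3) (Fin 3) ℂ := !![0, 2 * a, 2 * b; 0, 2 * c, 2 * d; 0, 0, 0] with hE
  set z : ℂ := star u ⬝ᵥ E *ᵥ u with hz
  by_cases hz0 : z = 0
  · rw [hz0]
    simpa using Real.sqrt_nonneg _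
  · have habs0 : (0:ℝ) < ‖z‖ := norm_pos_iff.mpr hz0
    set w : ℂ := z / (‖z‖ : ℝ) with hwdef
    have hw : ‖w‖ = 1 := by
      rw [hwdef, norm_div, Complex.norm_real, Real.norm_eq_abs,
        abs_of_pos habs0, div_self habs0.ne']
    have hH := hermPart_isHermitian ((starRingEnd ℂ w) • E)
    have hwz : starRingEnd ℂ w * z = (‖z‖ : ℝ) := by
      rw [hwdef, map_div₀, Complex.conj_ofReal]
      rw [div_mul_eq_mul_div, mul_comm, Complex.mul_conj, Complex.normSq_eq_norm_sq]
      push_cast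
      rw [sq, mul_div_assoc, div_self, mul_one]
      exact_mod_cast habs0.ne'
    have hform := hermPart_form ((starRingEnd ℂ w) • E) u u
    have hFz : star u ⬝ᵥ ((starRingEnd ℂ w) • E) *ᵥ u = starRingEnd ℂ w * z := by
      rw [hz, smul_mulVec, dotProduct_smul, smul_eq_mul]
    rw [hFz, hwz] at hform
    have hre : (star u ⬝ᵥ (hermPart ((starRingEnd ℂ w) • E)) *ᵥ u).re = ‖z‖ := by
      rw [hform]
      have : starRingEnd ℂ ((‖z‖ : ℝ) : ℂ) = ((‖z‖ : ℝ) : ℂ) :=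
        Complex.conj_ofReal _
      rw [this]
      have h12 : (1/2 : ℂ) * (((‖z‖ : ℝ) : ℂ) + ((‖z‖ : ℝ) : ℂ))
          = ((‖z‖ : ℝ) : ℂ) := by push_cast; ring
      rw [h12, Complex.ofReal_re]
    have hle := (eig_facts a b c d habcd hzero w hw hH).1
    have := form_le hH hle hu
    rw [hre] at this
    exact this

lemma dot_expand (M : Matrix (Fin 3) (Fin 3) ℂ) (v v' : Fin 3 → ℂ) (α β : ℂ) :
    star (fun k => α * v k + β * v' k) ⬝ᵥ M *ᵥ (fun k => α * v k + β * v' k)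
      = starRingEnd ℂ α * α * (star v ⬝ᵥ M *ᵥ v) + starRingEnd ℂ α * β * (star v ⬝ᵥ M *ᵥ v')
        + starRingEnd ℂ β * α * (star v' ⬝ᵥ M *ᵥ v)
        + starRingEnd ℂ β * β * (star v' ⬝ᵥ M *ᵥ v') := by
  simp [dotProduct, Matrix.mulVec, Fin.sum_univ_three, Pi.star_apply]
  ring

lemma dot_scale (u v : Fin 3 → ℂ) (t : ℂ) :
    star u ⬝ᵥ (fun k => t * v k) = t * (star u ⬝ᵥ v) := by
  simp [dotProduct, Fin.sum_univ_three, Pi.star_apply]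
  ring

lemma dot_expand_id (v v' : Fin 3 → ℂ) (α β : ℂ) :
    star (fun k => α * v k + β * v' k) ⬝ᵥ (fun k => α * v k + β * v' k)
      = starRingEnd ℂ α * α * (star v ⬝ᵥ v) + starRingEnd ℂ α * β * (star v ⬝ᵥ v')
        + starRingEnd ℂ β * α * (star v' ⬝ᵥ v) + starRingEnd ℂ β * β * (star v' ⬝ᵥ v') := by
  simp [dotProduct, Fin.sum_univ_three, Pi.star_apply]
  ring

theorem disk_matrix_three_by_three (a b c d : ℂ)
    (habcd : c * (((‖a‖) ^ 2 + (‖d‖) ^ 2 : ℝ) : ℂ)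
      = -(a * d * starRingEnd ℂ b))
    (hzero : a = 0 ∧ d = 0 → 2 * ‖c‖ ≤ ‖b‖) :
    (∀ w : ℂ, ‖w‖ = 1 →
      ∀ hH : (hermPart ((starRingEnd ℂ w) •
          !![0, 2 * a, 2 * b; 0, 2 * c, 2 * d; 0, 0, 0])).IsHermitian,
        (⨆ i, hH.eigenvalues i)
          = Real.sqrt ((‖a‖) ^ 2 + (‖d‖) ^ 2 + (‖b‖) ^ 2)) ∧
    fov !![0, 2 * a, 2 * b; 0, 2 * c, 2 * d; 0, 0, 0]
      = Metric.closedBall (0 : ℂ)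
          (Real.sqrt ((‖a‖) ^ 2 + (‖d‖) ^ 2 + (‖b‖) ^ 2)) := by
  set R : ℝ := Real.sqrt ((‖a‖) ^ 2 + (‖d‖) ^ 2 + (‖b‖) ^ 2)
    with hRdef
  constructor
  · intro w hw hH
    obtain ⟨hle, ⟨i, hi⟩, -⟩ := eig_facts a b c d habcd hzero w hw hH
    apply le_antisymm
    · exact ciSup_le hle
    · rw [hRdef, ← hi]
      exact le_ciSup (Set.Finite.bddAbove (Set.finite_range _)) i
  · ext z
    simp only [fov, Set.mem_setOf_eq, Metric.mem_closedBall, dist_zero_right]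
    constructor
    · rintro ⟨u, hu, rfl⟩
      exact abs_form_le a b c d habcd hzero hu
    · intro hznorm
      by_cases hz0 : z = 0
      · refine ⟨![1, 0, 0], ?_, ?_⟩
        · simp [dotProduct, Fin.sum_univ_three]
        · rw [hz0]
          simp [dotProduct, Matrix.mulVec, Fin.sum_univ_three]
      · -- main construction
        have hs0 : 0 < ‖z‖ := norm_pos_iff.mpr hz0
        have hsR : ‖z‖ ≤ R := by exact hznorm
        have hR0 : 0 < R := lt_of_lt_of_le hs0 hsR
        set s : ℝ := ‖z‖ with hsdef
        set E : Matrix (Fin 3) (Fin 3) ℂ := !![0, 2*a, 2*b; 0, 2*c, 2*d; 0, 0, 0] with hE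
        set w : ℂ := z / ((s:ℝ):ℂ) with hwdef
        have hw : ‖w‖ = 1 := by
          rw [hwdef, norm_div, Complex.norm_real, Real.norm_eq_abs,
            abs_of_pos hs0, div_self hs0.ne']
        have hH := hermPart_isHermitian ((starRingEnd ℂ w) • E)
        obtain ⟨hle, ⟨i, hi⟩, ⟨j, hj⟩⟩ := eig_facts a b c d habcd hzero w hw hH
        have hij : i ≠ j := by
          intro h
          rw [h, hj] at hi
          rw [← hRdef] at hi
          linarith
        rw [← hRdef] at hi hj hle
        set v : Fin 3 → ℂ := (WithLp.equiv 2 (Fin 3 → ℂ)) (hH.eigenvectorBasis i) with hv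
        set v' : Fin 3 → ℂ := (WithLp.equiv 2 (Fin 3 → ℂ)) (hH.eigenvectorBasis j) with hv'
        have horth := hH.eigenvectorBasis.orthonormal
        have hvv : star v ⬝ᵥ v = 1 := by
          have h := orthonormal_iff_ite.mp horth i i
          rw [EuclideanSpace.inner_eq_star_dotProduct] at h
          simpa [hv, dotProduct_comm] using h
        have hv'v' : star v' ⬝ᵥ v' = 1 := by
          have h := orthonormal_iff_ite.mp horth j j
          rw [EuclideanSpace.inner_eq_star_dotProduct] at h
          simpa [hv', dotProduct_comm] using h
        have hvv' : star v ⬝ᵥ v' = 0 := by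
          have h := orthonormal_iff_ite.mp horth i j
          rw [EuclideanSpace.inner_eq_star_dotProduct] at h
          simpa [hij, hv, hv', dotProduct_comm] using h
        have hv'v : star v' ⬝ᵥ v = 0 := by
          have h := orthonormal_iff_ite.mp horth j i
          rw [EuclideanSpace.inner_eq_star_dotProduct] at h
          simpa [hij.symm, hv, hv', dotProduct_comm] using h
        have hEv : hermPart ((starRingEnd ℂ w) • E) *ᵥ v = fun k => (R:ℂ) * v k := by
          have h := hH.mulVec_eigenvectorBasis i
          rw [hi] at h
          funext k
          have hk := congrFun h k
          simpa [Complex.real_smul, hv] using hk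
        have hEv' : hermPart ((starRingEnd ℂ w) • E) *ᵥ v' = fun k => (-R:ℂ) * v' k := by
          have h := hH.mulVec_eigenvectorBasis j
          rw [hj] at h
          funext k
          have hk := congrFun h k
          simpa [Complex.real_smul, hv'] using hk
        set z0 : ℂ := star v ⬝ᵥ ((starRingEnd ℂ w) • E) *ᵥ v with hz0def
        set z1 : ℂ := star v' ⬝ᵥ ((starRingEnd ℂ w) • E) *ᵥ v' with hz1def
        set p : ℂ := star v ⬝ᵥ ((starRingEnd ℂ w) • E) *ᵥ v' with hpdef
        set q : ℂ := star v' ⬝ᵥ ((starRingEnd ℂ w) • E) *ᵥ v with hqdef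
        -- absolute value bounds via abs_form_le
        have habs_smul : ∀ x : Fin 3 → ℂ, ∀ y : Fin 3 → ℂ,
            star x ⬝ᵥ ((starRingEnd ℂ w) • E) *ᵥ y
              = starRingEnd ℂ w * (star x ⬝ᵥ E *ᵥ y) := by
          intro x y
          rw [smul_mulVec, dotProduct_smul, smul_eq_mul]
        have habsw : ‖starRingEnd ℂ w‖ = 1 := by
          rw [Complex.norm_conj, hw]
        have habsz0 : ‖z0‖ ≤ R := by
          rw [hz0def, habs_smul, norm_mul, habsw, one_mul]
          exact abs_form_le a b c d habcd hzero hvv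
        have habsz1 : ‖z1‖ ≤ R := by
          rw [hz1def, habs_smul, norm_mul, habsw, one_mul]
          exact abs_form_le a b c d habcd hzero hv'v'
        have hz0R : z0 = (R:ℂ) := by
          apply complex_eq_of _ habsz0
          have h := hermPart_form ((starRingEnd ℂ w) • E) v v
          rw [hEv, dot_scale, hvv, mul_one] at h
          rw [← hz0def] at h
          linear_combination 2 * h.symm
        have hz1R : z1 = (-R:ℂ) := by
          have : -z1 = ((R:ℝ):ℂ) := by
            apply complex_eq_of _ (by rwa [norm_neg])
            have h := hermPart_form ((starRingEnd ℂ w) • E) v' v'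
            rw [hEv', dot_scale, hv'v', mul_one] at h
            rw [← hz1def] at h
            have hc : starRingEnd ℂ (-z1) = - starRingEnd ℂ z1 := by simp
            rw [hc]
            linear_combination (-2) * h.symm
          push_cast
          linear_combination -this
        have hqp : q = - starRingEnd ℂ p := by
          have h := hermPart_form ((starRingEnd ℂ w) • E) v v'
          rw [hEv', dot_scale, hvv', mul_zero] at h
          rw [← hpdef, ← hqdef] at h
          have h2 : p + starRingEnd ℂ q = 0 := by linear_combination 2 * h.symm
          have h4 : starRingEnd ℂ q = -p := by linear_combination h2
          rw [← Complex.conj_conj q, h4, map_neg]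
        -- scalars
        set α : ℝ := Real.sqrt ((1 + s/R)/2) with hαdef
        set m : ℝ := Real.sqrt ((1 - s/R)/2) with hmdef
        have hsle : s / R ≤ 1 := (div_le_one hR0).mpr hsR
        have hsnn : 0 ≤ s / R := by positivity
        have hα2 : α^2 = (1 + s/R)/2 := Real.sq_sqrt (by linarith)
        have hm2 : m^2 = (1 - s/R)/2 := Real.sq_sqrt (by linarith)
        set ζ : ℂ := if p = 0 then 1 else starRingEnd ℂ p / ((‖p‖ : ℝ) : ℂ) with hζdef
        have hζp : ζ * p = ((‖p‖ : ℝ) : ℂ) := by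
          by_cases hp : p = 0
          · simp [hζdef, hp]
          · rw [hζdef, if_neg hp, div_mul_eq_mul_div, mul_comm, Complex.mul_conj,
              Complex.normSq_eq_norm_sq]
            push_cast
            rw [sq, mul_div_assoc, div_self, mul_one]
            exact_mod_cast (norm_pos_iff.mpr hp).ne'
        have hζp' : starRingEnd ℂ ζ * starRingEnd ℂ p = ((‖p‖ : ℝ) : ℂ) := by
          have h := congrArg (starRingEnd ℂ) hζp
          simpa [Complex.conj_ofReal] using h
        have hζζ : starRingEnd ℂ ζ * ζ = 1 := by
          by_cases hp : p = 0
          · simp [hζdef, hp]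
          · rw [hζdef, if_neg hp]
            simp only [map_div₀, Complex.conj_conj, Complex.conj_ofReal]
            have hpne : ((‖p‖ : ℝ) : ℂ) ≠ 0 := by
              exact_mod_cast (norm_pos_iff.mpr hp).ne'
            rw [div_mul_div_comm, Complex.mul_conj, Complex.normSq_eq_norm_sq]
            push_cast
            rw [sq, div_self (mul_ne_zero hpne hpne)]
        set β : ℂ := ζ * ((m:ℝ):ℂ) with hβdef
        have hββ : starRingEnd ℂ β * β = (((m:ℝ):ℂ))^2 := by
          simp only [hβdef, _root_.map_mul, Complex.conj_ofReal]
          linear_combination (((m:ℝ):ℂ))^2 * hζζ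
        set u : Fin 3 → ℂ := fun k => ((α:ℝ):ℂ) * v k + β * v' k with hudef
        have hsum : α^2 + m^2 = 1 := by
          rw [hα2, hm2]; ring
        have hdiff : (α^2 - m^2) * R = s := by
          rw [hα2, hm2]
          field_simp
          ring
        have hu1 : star u ⬝ᵥ u = 1 := by
          rw [hudef, dot_expand_id, hvv, hvv', hv'v, hv'v', Complex.conj_ofReal, hββ]
          have : ((α:ℝ):ℂ)^2 + ((m:ℝ):ℂ)^2 = 1 := by
            push_cast
            exact_mod_cast congrArg (fun t : ℝ => (t:ℂ)) hsum
          linear_combination this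
        have hFu : star u ⬝ᵥ ((starRingEnd ℂ w) • E) *ᵥ u = ((s:ℝ):ℂ) := by
          rw [hudef, dot_expand, ← hz0def, ← hz1def, ← hpdef, ← hqdef, hz0R, hz1R, hqp,
            Complex.conj_ofReal, hβdef]
          have hdiffC : (((α:ℝ):ℂ)^2 - ((m:ℝ):ℂ)^2) * ((R:ℝ):ℂ) = ((s:ℝ):ℂ) := by
            exact_mod_cast congrArg (fun t : ℝ => (t:ℂ)) hdiff
          simp only [_root_.map_mul, Complex.conj_ofReal]
          linear_combination hdiffC + (((α:ℝ):ℂ) * ((m:ℝ):ℂ)) * hζp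
            - (((α:ℝ):ℂ) * ((m:ℝ):ℂ)) * hζp'
            - (((m:ℝ):ℂ)^2 * ((R:ℝ):ℂ)) * hζζ
        refine ⟨u, hu1, ?_⟩
        have hX := hFu
        rw [habs_smul] at hX
        have hwconj : z * starRingEnd ℂ w = ((s:ℝ):ℂ) := by
          rw [hwdef, map_div₀, Complex.conj_ofReal, mul_div_assoc', Complex.mul_conj,
            Complex.normSq_eq_norm_sq, ← hsdef]
          push_cast
          rw [sq, mul_div_assoc, div_self, mul_one]
          exact_mod_cast hs0.ne'
        have hsne : ((s:ℝ):ℂ) ≠ 0 := by exact_mod_cast hs0.ne'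
        apply mul_left_cancel₀ hsne
        calc ((s:ℝ):ℂ) * z = z * ((s:ℝ):ℂ) := by ring
        _ = z * (starRingEnd ℂ w * (star u ⬝ᵥ E *ᵥ u)) := by rw [hX]
        _ = (z * starRingEnd ℂ w) * (star u ⬝ᵥ E *ᵥ u) := by ring
        _ = ((s:ℝ):ℂ) * (star u ⬝ᵥ E *ᵥ u) := by rw [hwconj]
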